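/- For each x > 0 let ω_x > 0 be the positive real number such that, with Λ_ω = {m·(ω/√3)·e^{iπ/6} + n·(ω/√3)·e^{iπ/2} : m, n ∈ ℤ}, the function u_x(y) = 6·℘_{Λ_{ω_x}}(y + 2ω_x/3) is the strictly increasing solution of the boundary value problem u'' = u², u(0) = 0, u(x) = 1 on [0, x]. Then lim_{x→∞} ω_x / x = 3. -/

import Mathlib

open Set Filter

/-- The Weierstrass ℘-function of the lattice `Λ`. -/
noncomputable def wp (Λ : Set ℂ) (z : ℂ) : ℂ :=
  1 / z ^ 2 + ∑' l : {l : ℂ // l ∈ Λ ∧ l ≠ 0}, (1 / (z - (l : ℂ)) ^ 2 - 1 / (l : ℂ) ^ 2)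

/-- The lattice `Λ_ω` generated by `(ω/√3) e^{iπ/6}` and `(ω/√3) e^{iπ/2}`. -/
noncomputable def Lomega (ω : ℝ) : Set ℂ :=
  {z : ℂ | ∃ m n : ℤ,
    z = (m : ℂ) * (((ω / Real.sqrt 3 : ℝ) : ℂ) * Complex.exp ((Real.pi : ℂ) * Complex.I / 6)) +
        (n : ℂ) * (((ω / Real.sqrt 3 : ℝ) : ℂ) * Complex.exp ((Real.pi : ℂ) * Complex.I / 2))}

namespace PA

lemma exp1 : Complex.exp ((Real.pi : ℂ) * Complex.I / 6) =
    ((Real.sqrt 3 / 2 : ℝ) : ℂ) + ((1/2 : ℝ) : ℂ) * Complex.I := by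
  have : (Real.pi : ℂ) * Complex.I / 6 = ((Real.pi/6 : ℝ) : ℂ) * Complex.I := by push_cast; ring
  rw [this, Complex.exp_mul_I, ← Complex.ofReal_cos, ← Complex.ofReal_sin,
    Real.cos_pi_div_six, Real.sin_pi_div_six]

lemma exp2 : Complex.exp ((Real.pi : ℂ) * Complex.I / 2) = Complex.I := by
  have : (Real.pi : ℂ) * Complex.I / 2 = ((Real.pi/2 : ℝ) : ℂ) * Complex.I := by push_cast; ring
  rw [this, Complex.exp_mul_I, ← Complex.ofReal_cos, ← Complex.ofReal_sin,
    Real.cos_pi_div_two, Real.sin_pi_div_two]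
  simp

noncomputable def cc (p : Fin 2 → ℤ) : ℂ :=
  (p 0 : ℂ) * (((1 / Real.sqrt 3 : ℝ) : ℂ) * Complex.exp ((Real.pi : ℂ) * Complex.I / 6)) +
  (p 1 : ℂ) * (((1 / Real.sqrt 3 : ℝ) : ℂ) * Complex.exp ((Real.pi : ℂ) * Complex.I / 2))

lemma s3_pos : (0:ℝ) < Real.sqrt 3 := Real.sqrt_pos.mpr (by norm_num)
lemma s3_sq : Real.sqrt 3 * Real.sqrt 3 = 3 := Real.mul_self_sqrt (by norm_num)
lemma s3_le : Real.sqrt 3 ≤ 2 := by nlinarith [s3_sq, s3_pos]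
lemma s3_ge : (1:ℝ) ≤ Real.sqrt 3 := by nlinarith [s3_sq, s3_pos]

lemma cc_re (p : Fin 2 → ℤ) : (cc p).re = (p 0 : ℝ) / 2 := by
  have h3 := s3_pos
  simp [cc, exp1, exp2, Complex.div_re, Complex.add_re, Complex.mul_re]
  field_simp
  rw [Real.sq_sqrt (by norm_num)]

lemma cc_im (p : Fin 2 → ℤ) : (cc p).im = ((p 0 : ℝ) + 2 * (p 1 : ℝ)) / (2 * Real.sqrt 3) := by
  have h3 := s3_pos
  simp [cc, exp1, exp2, Complex.div_re, Complex.add_re, Complex.mul_re]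
  field_simp
  linear_combination ((p 0 : ℝ) + 2*(p 1)) * s3_sq

lemma norm_cc_ge_re (p : Fin 2 → ℤ) : |(p 0 : ℝ)| / 2 ≤ ‖cc p‖ := by
  have := Complex.abs_re_le_norm (cc p)
  rw [cc_re] at this
  calc |(p 0 : ℝ)| / 2 = |(p 0 : ℝ) / 2| := by rw [abs_div]; norm_num
  _ ≤ _ := this

lemma norm_cc_ge_im (p : Fin 2 → ℤ) :
    |(p 0 : ℝ) + 2 * (p 1 : ℝ)| / (2 * Real.sqrt 3) ≤ ‖cc p‖ := by
  have := Complex.abs_im_le_norm (cc p)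
  rw [cc_im] at this
  calc |(p 0 : ℝ) + 2 * (p 1:ℝ)| / (2 * Real.sqrt 3)
      = |((p 0 : ℝ) + 2 * (p 1:ℝ)) / (2 * Real.sqrt 3)| := by
        rw [abs_div, abs_of_pos (by positivity : (0:ℝ) < 2 * Real.sqrt 3)]
  _ ≤ _ := this

lemma int_cast_ge {k : ℤ} (hk : k ≠ 0) : (1:ℝ) ≤ |(k : ℝ)| := by
  have : (1:ℤ) ≤ |k| := Int.one_le_abs hk
  calc (1:ℝ) = ((1:ℤ):ℝ) := by norm_num
  _ ≤ ((|k|:ℤ):ℝ) := by exact_mod_cast this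
  _ = |(k : ℝ)| := by push_cast; ring

lemma half_le_norm_cc {p : Fin 2 → ℤ} (hp : p ≠ 0) : 1/2 ≤ ‖cc p‖ := by
  rcases eq_or_ne (p 0) 0 with h0 | h0
  · have h1 : p 1 ≠ 0 := by
      intro h1; apply hp; funext i; fin_cases i <;> simp [h0, h1]
    have h2 : (1:ℝ) ≤ |(p 1 : ℝ)| := int_cast_ge h1
    have h := norm_cc_ge_im p
    rw [h0] at h
    have hs := s3_le
    have he : |((0:ℤ):ℝ) + 2*(p 1:ℝ)| = 2*|(p 1:ℝ)| := by
      rw [Int.cast_zero, zero_add, abs_mul]; norm_num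
    rw [he] at h
    have hden : 2 * |(p 1:ℝ)| / (2 * Real.sqrt 3) ≥ 1/2 := by
      rw [ge_iff_le, le_div_iff₀ (by positivity)]
      nlinarith
    linarith
  · have h := norm_cc_ge_re p
    have : (1:ℝ) ≤ |(p 0 : ℝ)| := int_cast_ge h0
    linarith

lemma cc_ne_zero {p : Fin 2 → ℤ} (hp : p ≠ 0) : cc p ≠ 0 := by
  intro h
  have := half_le_norm_cc hp
  rw [h] at this; simp at this; linarith

lemma norm_p_le (p : Fin 2 → ℤ) : ‖p‖ ≤ 3 * ‖cc p‖ := by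
  have h1 := norm_cc_ge_re p
  have h2 := norm_cc_ge_im p
  have hs := s3_le
  have hs0 := s3_pos
  have h2' : |(p 0 : ℝ) + 2 * (p 1 : ℝ)| ≤ 2 * Real.sqrt 3 * ‖cc p‖ := by
    rw [div_le_iff₀ (by positivity)] at h2; linarith [h2]
  apply pi_norm_le_iff_of_nonneg (by positivity) |>.mpr
  intro i
  fin_cases i
  · rw [Int.norm_eq_abs]
    push_cast
    linarith [norm_nonneg (cc p)]
  · rw [Int.norm_eq_abs]
    push_cast
    have : |(p 1 : ℝ)| ≤ (|(p 0:ℝ) + 2*(p 1:ℝ)| + |(p 0:ℝ)|)/2 := by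
      have h5 := abs_sub ((p 0:ℝ) + 2*(p 1:ℝ)) (p 0:ℝ)
      have h3 : |(p 0:ℝ) + 2*(p 1:ℝ) - (p 0:ℝ)| = 2 * |(p 1:ℝ)| := by
        rw [show (p 0:ℝ) + 2*(p 1:ℝ) - (p 0:ℝ) = 2*(p 1:ℝ) by ring, abs_mul]; norm_num
      rw [h3] at h5
      linarith
    nlinarith [abs_nonneg ((p 0:ℝ)), norm_nonneg (cc p)]

lemma cc_injective : Function.Injective cc := by
  intro p q h
  have hre : (p 0 : ℝ) / 2 = (q 0 : ℝ) / 2 := by rw [← cc_re, ← cc_re, h]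
  have him := congrArg Complex.im h
  rw [cc_im, cc_im] at him
  have h3 := s3_pos
  have h0 : (p 0 : ℝ) = (q 0 : ℝ) := by linarith
  have h0' : p 0 = q 0 := by exact_mod_cast h0
  have h1 : (p 1 : ℝ) = (q 1 : ℝ) := by
    field_simp at him
    linarith
  have h1' : p 1 = q 1 := by exact_mod_cast h1
  funext i; fin_cases i <;> assumption

lemma cc_p0 : cc ![2, -1] = 1 := by
  apply Complex.ext
  · rw [cc_re]; norm_num
  · rw [cc_im]; norm_num

lemma dist_lemma {t : ℝ} (ht : t ∈ Icc (1/2:ℝ) (3/2)) {p : Fin 2 → ℤ}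
    (hp : p ≠ 0) (hp0 : p ≠ ![2, -1]) : 1/4 ≤ ‖(t:ℂ) - cc p‖ := by
  obtain ⟨ht1, ht2⟩ := ht
  have hs := s3_le
  have hs0 := s3_pos
  rcases eq_or_ne (p 0 + 2 * p 1) 0 with h | h
  · -- real lattice point, an integer ≠ 0, 1
    have him : (cc p).im = 0 := by
      rw [cc_im]
      have : (p 0 : ℝ) + 2 * (p 1 : ℝ) = 0 := by exact_mod_cast h
      rw [this]; simp
    have hm0 : p 0 ≠ 0 := by
      intro h0
      apply hp; funext i; fin_cases i
      · exact h0
      · simpa [h0] using h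
    have hm2 : p 0 ≠ 2 := by
      intro h2
      apply hp0; funext i; fin_cases i
      · simpa using h2
      · simp; omega
    have heven : p 0 = -2 * p 1 := by omega
    have hcase : p 0 ≤ -2 ∨ 4 ≤ p 0 := by omega
    have hre : ((t:ℂ) - cc p).re = t - (p 0 : ℝ)/2 := by
      simp [Complex.sub_re, cc_re]
    have : 1/2 ≤ |t - (p 0 : ℝ)/2| := by
      rcases hcase with hc | hc
      · have : (p 0 : ℝ) ≤ -2 := by exact_mod_cast hc
        rw [abs_of_nonneg (by linarith)]; linarith
      · have : (4:ℝ) ≤ (p 0 : ℝ) := by exact_mod_cast hc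
        rw [abs_of_nonpos (by linarith)]; linarith
    have habs := Complex.abs_re_le_norm ((t:ℂ) - cc p)
    rw [hre] at habs
    linarith
  · have him : ((t:ℂ) - cc p).im = -(((p 0 : ℝ) + 2 * (p 1 : ℝ)) / (2 * Real.sqrt 3)) := by
      simp [Complex.sub_im, cc_im]
    have habs := Complex.abs_im_le_norm ((t:ℂ) - cc p)
    rw [him, abs_neg] at habs
    have h1 : (1:ℝ) ≤ |(p 0 : ℝ) + 2 * (p 1 : ℝ)| := by
      have : ((p 0 + 2 * p 1 : ℤ) : ℝ) = (p 0 : ℝ) + 2 * (p 1 : ℝ) := by push_cast; ring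
      rw [← this]
      exact int_cast_ge h
    have : 1/4 ≤ |(p 0 : ℝ) + 2 * (p 1 : ℝ)| / (2 * Real.sqrt 3) := by
      rw [le_div_iff₀ (by positivity)]
      nlinarith
    have : |((p 0 : ℝ) + 2 * (p 1 : ℝ)) / (2 * Real.sqrt 3)| =
        |(p 0 : ℝ) + 2 * (p 1 : ℝ)| / (2 * Real.sqrt 3) := by
      rw [abs_div, abs_of_pos (show (0:ℝ) < 2 * Real.sqrt 3 by positivity)]
    linarith [habs]

/-- uniform bound for the non-principal terms -/
lemma term_bound {t : ℝ} (ht : t ∈ Icc (1/2:ℝ) (3/2)) {p : Fin 2 → ℤ}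
    (hp : p ≠ 0) (hp0 : p ≠ ![2, -1]) :
    ‖1 / ((t:ℂ) - cc p)^2 - 1 / (cc p)^2‖ ≤ 600 * (‖cc p‖^3)⁻¹ := by
  obtain ⟨ht1, ht2⟩ := ht
  set l := cc p with hl
  have hl0 : l ≠ 0 := cc_ne_zero hp
  have ha : 1/2 ≤ ‖l‖ := half_le_norm_cc hp
  have hd : 1/4 ≤ ‖(t:ℂ) - l‖ := dist_lemma ⟨ht1, ht2⟩ hp hp0
  have hd0 : (t:ℂ) - l ≠ 0 := by
    intro h0; rw [h0] at hd; simp at hd; linarith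
  have hiden : 1 / ((t:ℂ) - l)^2 - 1 / l^2 =
      ((t:ℂ) * (2*l - (t:ℂ))) / (((t:ℂ) - l)^2 * l^2) := by
    field_simp
    ring
  rw [hiden]
  rw [norm_div, norm_mul, norm_mul, norm_pow, norm_pow]
  have hnt : ‖(t:ℂ)‖ ≤ 3/2 := by
    rw [Complex.norm_real, Real.norm_eq_abs]
    rw [abs_of_nonneg (by linarith)]; linarith
  have hnum : ‖2*l - (t:ℂ)‖ ≤ 2*‖l‖ + 3/2 := by
    calc ‖2*l - (t:ℂ)‖ ≤ ‖2*l‖ + ‖(t:ℂ)‖ := norm_sub_le _ _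
    _ ≤ 2*‖l‖ + 3/2 := by
          have habs : |t| ≤ 3/2 := abs_le.mpr ⟨by linarith, ht2⟩
          rw [norm_mul]; simp; linarith [habs]
  have htl : ‖l‖ - 3/2 ≤ ‖(t:ℂ) - l‖ := by
    have := norm_sub_norm_le l (t:ℂ)
    rw [← norm_neg (l - (t:ℂ))] at this
    simp only [neg_sub] at this
    linarith [hnt]
  -- reduce to real inequality
  set a := ‖l‖
  set d := ‖(t:ℂ) - l‖
  have ha0 : (0:ℝ) < a := by linarith
  have hd0' : (0:ℝ) < d := by linarith
  rw [div_le_iff₀ (by positivity)]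
  have hb : ‖(t:ℂ)‖ * ‖2*l - (t:ℂ)‖ ≤ (3/2) * (2*a + 3/2) :=
    mul_le_mul hnt hnum (norm_nonneg _) (by norm_num)
  have key : ‖(t:ℂ)‖ * ‖2*l - (t:ℂ)‖ * a ≤ 600 * d^2 := by
    rcases le_or_gt a 3 with hc | hc
    · have h1 : ‖(t:ℂ)‖ * ‖2*l - (t:ℂ)‖ * a ≤ (45/4) * 3 :=
        mul_le_mul (hb.trans (by nlinarith)) hc ha0.le (by norm_num)
      have h2 : (1/4:ℝ)^2 ≤ d^2 := pow_le_pow_left₀ (by norm_num) hd 2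
      linarith
    · have hda : a/2 ≤ d := by linarith
      have h1 : ‖(t:ℂ)‖ * ‖2*l - (t:ℂ)‖ * a ≤ (3/2) * (2*a + 3/2) * a :=
        mul_le_mul_of_nonneg_right hb ha0.le
      have h2 : (a/2)^2 ≤ d^2 := pow_le_pow_left₀ (by positivity) hda 2
      nlinarith [ha0, hc]
  calc ‖(t:ℂ)‖ * ‖2*l - (t:ℂ)‖ ≤ 600 * d^2 / a := by
        rw [le_div_iff₀ ha0]; linarith [key]
  _ ≤ 600 * (a^3)⁻¹ * (d^2 * a^2) := by
        rw [div_eq_mul_inv]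
        have : (a^3)⁻¹ * a^2 = a⁻¹ := by
          field_simp
        calc 600 * d^2 * a⁻¹ = 600 * (a^3)⁻¹ * (d^2 * a^2) := by
              field_simp
        _ ≤ _ := le_refl _
  _ = _ := by ring

lemma norm_p_ge_one {p : Fin 2 → ℤ} (hp : p ≠ 0) : (1:ℝ) ≤ ‖p‖ := by
  obtain ⟨i, hi⟩ := Function.ne_iff.mp hp
  calc (1:ℝ) ≤ ‖p i‖ := by rw [Int.norm_eq_abs]; exact int_cast_ge hi
  _ ≤ ‖p‖ := norm_le_pi_norm p i

lemma summable_u : Summable (fun p : {p : Fin 2 → ℤ // p ≠ 0} => 600 * (‖cc p.val‖^3)⁻¹) := by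
  have hs : Summable (fun x : Fin 2 → ℤ => ‖x‖ ^ (-(3:ℝ))) :=
    EisensteinSeries.summable_one_div_norm_rpow (by norm_num)
  have hs2 := (hs.subtype {p : Fin 2 → ℤ | p ≠ 0}).mul_left (600*27 : ℝ)
  apply Summable.of_nonneg_of_le (fun p => by positivity) _ hs2
  intro p
  have h1 : ‖p.val‖ ≤ 3 * ‖cc p.val‖ := norm_p_le p.val
  have hppos : (0:ℝ) < ‖p.val‖ := lt_of_lt_of_le one_pos (norm_p_ge_one p.2)
  have hccpos : (0:ℝ) < ‖cc p.val‖ := lt_of_lt_of_le (by norm_num) (half_le_norm_cc p.2)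
  have hr : (‖p.val‖ : ℝ) ^ (-(3:ℝ)) = (‖p.val‖^(3:ℕ))⁻¹ := by
    rw [Real.rpow_neg (norm_nonneg _)]
    norm_num
  show 600 * (‖cc p.val‖^3)⁻¹ ≤ 600*27 * (fun x : Fin 2 → ℤ => ‖x‖ ^ (-(3:ℝ))) p.val
  simp only
  rw [hr]
  have h3 : ‖p.val‖^(3:ℕ) ≤ 27 * ‖cc p.val‖^(3:ℕ) := by
    calc ‖p.val‖^(3:ℕ) ≤ (3*‖cc p.val‖)^(3:ℕ) := pow_le_pow_left₀ (norm_nonneg _) h1 3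
    _ = 27 * ‖cc p.val‖^3 := by ring
  have hi : (‖cc p.val‖^(3:ℕ))⁻¹ ≤ 27 * (‖p.val‖^(3:ℕ))⁻¹ := by
    rw [← one_div, show (27:ℝ) * (‖p.val‖^(3:ℕ))⁻¹ = 27 / ‖p.val‖^(3:ℕ) from (div_eq_mul_inv _ _).symm,
      div_le_div_iff₀ (by positivity) (by positivity)]
    nlinarith
  linarith

/-- parametrization of `Lomega 1` minus zero -/
noncomputable def E1 : {p : Fin 2 → ℤ // p ≠ 0} ≃ {l : ℂ // l ∈ Lomega 1 ∧ l ≠ 0} := by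
  apply Equiv.ofBijective (fun p => ⟨cc p.val, ⟨p.val 0, p.val 1, rfl⟩, cc_ne_zero p.2⟩)
  constructor
  · intro p q h
    exact Subtype.ext (cc_injective (congrArg Subtype.val h))
  · rintro ⟨z, ⟨m, n, hz⟩, hz0⟩
    have hcc : cc ![m, n] = z := by
      rw [cc, hz]; simp
    refine ⟨⟨![m, n], ?_⟩, ?_⟩
    · intro h0
      apply hz0
      rw [← hcc, h0]
      simp [cc]
    · exact Subtype.ext hcc

/-- scaling the lattice -/
noncomputable def E2 {ω : ℝ} (hω : ω ≠ 0) :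
    {l : ℂ // l ∈ Lomega 1 ∧ l ≠ 0} ≃ {l : ℂ // l ∈ Lomega ω ∧ l ≠ 0} := by
  have hωc : ((ω:ℝ):ℂ) ≠ 0 := by exact_mod_cast hω
  apply Equiv.ofBijective (fun l => ⟨(ω:ℂ) * l.val, by
    obtain ⟨⟨m, n, hl⟩, hl0⟩ := l.2
    refine ⟨⟨m, n, ?_⟩, mul_ne_zero hωc hl0⟩
    rw [hl]; push_cast; ring⟩)
  constructor
  · intro p q h
    have := congrArg Subtype.val h
    simp only at this
    exact Subtype.ext (mul_left_cancel₀ hωc this)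
  · rintro ⟨z, ⟨m, n, hz⟩, hz0⟩
    set w : ℂ := (m : ℂ) * (((1 / Real.sqrt 3 : ℝ) : ℂ) * Complex.exp ((Real.pi : ℂ) * Complex.I / 6)) +
        (n : ℂ) * (((1 / Real.sqrt 3 : ℝ) : ℂ) * Complex.exp ((Real.pi : ℂ) * Complex.I / 2)) with hw
    have hzw : z = (ω:ℂ) * w := by
      rw [hz, hw]; push_cast; ring
    have hw0 : w ≠ 0 := by
      intro h0; apply hz0; rw [hzw, h0, mul_zero]
    exact ⟨⟨w, ⟨m, n, hw⟩, hw0⟩, Subtype.ext hzw.symm⟩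

lemma wp_scale {ω : ℝ} (hω : ω ≠ 0) (τ : ℂ) :
    wp (Lomega ω) ((ω:ℂ) * τ) = ((ω:ℂ)^2)⁻¹ * wp (Lomega 1) τ := by
  have hωc : ((ω:ℝ):ℂ) ≠ 0 := by exact_mod_cast hω
  unfold wp
  rw [← Equiv.tsum_eq (E2 hω)]
  have hterm : ∀ l : {l : ℂ // l ∈ Lomega 1 ∧ l ≠ 0},
      (1 / ((ω:ℂ) * τ - ((E2 hω) l : ℂ))^2 - 1 / (((E2 hω) l : ℂ))^2) =
      ((ω:ℂ)^2)⁻¹ * (1 / (τ - (l:ℂ))^2 - 1 / ((l:ℂ))^2) := by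
    intro l
    have hval : ((E2 hω) l : ℂ) = (ω:ℂ) * (l:ℂ) := rfl
    rw [hval, show (ω:ℂ) * τ - (ω:ℂ) * (l:ℂ) = (ω:ℂ) * (τ - (l:ℂ)) by ring,
      mul_pow, mul_pow, one_div, one_div, mul_inv, mul_inv, ← one_div ((τ - (l:ℂ))^2),
      ← one_div (((l:ℂ))^2)]
    ring
  rw [tsum_congr hterm, tsum_mul_left, mul_pow, one_div, mul_inv, ← one_div (τ^2)]
  ring

lemma key : ∃ M : ℝ, 0 ≤ M ∧ ∀ t : ℝ, t ∈ Icc (1/2:ℝ) (3/2) →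
    ‖wp (Lomega 1) (t:ℂ) - (((t:ℂ) - 1)^2)⁻¹‖ ≤ M := by
  set u := fun p : {p : Fin 2 → ℤ // p ≠ 0} => 600 * (‖cc p.val‖^3)⁻¹ with hu_def
  have hu := summable_u
  have hU0 : 0 ≤ ∑' p, u p := tsum_nonneg (fun p => by positivity)
  refine ⟨5 + ∑' p, u p, by linarith, ?_⟩
  intro t ht
  obtain ⟨ht1, ht2⟩ := ht
  have hp0ne : (![2,-1] : Fin 2 → ℤ) ≠ 0 := by
    intro h; have := congrFun h 0; simp at this
  set P0 : {p : Fin 2 → ℤ // p ≠ 0} := ⟨![2,-1], hp0ne⟩ with hP0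
  set f : {p : Fin 2 → ℤ // p ≠ 0} → ℂ :=
    fun p => 1/((t:ℂ) - cc p.val)^2 - 1/(cc p.val)^2 with hf
  have hbound : ∀ p, p ≠ P0 → ‖f p‖ ≤ u p := fun p hne =>
    term_bound ⟨ht1,ht2⟩ p.2 (fun h => hne (Subtype.ext h))
  have hS1 : Summable (fun p => if p = P0 then f p else 0) := by
    apply summable_of_ne_finset_zero (s := {P0})
    intro p hp
    simp only [Finset.mem_singleton] at hp
    simp [hp]
  have hS2 : Summable (fun p => if p = P0 then 0 else f p) := by
    apply Summable.of_norm_bounded hu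
    intro p
    by_cases h : p = P0
    · rw [h, if_pos rfl, norm_zero]
      show (0:ℝ) ≤ 600 * (‖cc (P0.val)‖^3)⁻¹
      positivity
    · simp only [if_neg h]; exact hbound p h
  have hwp : wp (Lomega 1) (t:ℂ) = 1/(t:ℂ)^2 + ∑' p, f p := by
    unfold wp
    rw [← Equiv.tsum_eq E1]
    rfl
  have hsplit : ∑' p, f p = f P0 + ∑' p, (if p = P0 then 0 else f p) := by
    have hfe : (fun p => f p) =
        fun p => (if p = P0 then f p else 0) + (if p = P0 then 0 else f p) :=
      funext fun p => by by_cases h : p = P0 <;> simp [h]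
    rw [hfe, Summable.tsum_add hS1 hS2]
    congr 1
    rw [show (fun p => if p = P0 then f p else 0) = fun p => if p = P0 then f P0 else 0
      from funext fun p => by by_cases h : p = P0 <;> simp [h]]
    exact tsum_ite_eq P0 (fun _ => f P0)
  have hfP0 : f P0 = 1/((t:ℂ)-1)^2 - 1 := by
    simp only [hf, hP0, cc_p0]
    norm_num
  have hrw : wp (Lomega 1) (t:ℂ) - (((t:ℂ) - 1)^2)⁻¹ =
      (1/(t:ℂ)^2 - 1) + ∑' p, (if p = P0 then 0 else f p) := by
    rw [hwp, hsplit, hfP0, one_div (((t:ℂ) - 1)^2)]; ring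
  rw [hrw]
  have hnorm1 : ‖1/(t:ℂ)^2 - 1‖ ≤ 5 := by
    have h1 : ‖1/(t:ℂ)^2‖ ≤ 4 := by
      rw [one_div, norm_inv, norm_pow, Complex.norm_real, Real.norm_eq_abs]
      have habs : (1/2:ℝ) ≤ |t| := le_trans ht1 (le_abs_self t)
      have h2 : (1/4:ℝ) ≤ |t|^2 := by nlinarith
      calc (|t|^2)⁻¹ ≤ ((1:ℝ)/4)⁻¹ := by
            apply inv_anti₀ (by norm_num) h2
      _ = 4 := by norm_num
    calc ‖1/(t:ℂ)^2 - 1‖ ≤ ‖1/(t:ℂ)^2‖ + ‖(1:ℂ)‖ := norm_sub_le _ _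
    _ ≤ 5 := by rw [norm_one]; linarith
  have hnorm2 : ‖∑' p, (if p = P0 then 0 else f p)‖ ≤ ∑' p, u p := by
    apply tsum_of_norm_bounded hu.hasSum
    intro p
    by_cases h : p = P0
    · rw [h, if_pos rfl, norm_zero]
      show (0:ℝ) ≤ 600 * (‖cc (P0.val)‖^3)⁻¹
      positivity
    · simp only [if_neg h]; exact hbound p h
  calc ‖(1/(t:ℂ)^2 - 1) + _‖ ≤ ‖1/(t:ℂ)^2 - 1‖ + ‖∑' p, (if p = P0 then 0 else f p)‖ :=
        norm_add_le _ _
  _ ≤ 5 + ∑' p, u p := add_le_add hnorm1 hnorm2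

lemma wp_eval {w : ℝ} (hw : 0 < w) (t : ℝ) :
    wp (Lomega w) (((w * t : ℝ) : ℂ)) = ((w:ℂ)^2)⁻¹ * wp (Lomega 1) ((t:ℝ):ℂ) := by
  rw [← wp_scale (ne_of_gt hw) ((t:ℝ):ℂ)]
  norm_cast

lemma core {M : ℝ} (hM : 0 ≤ M)
    (hkey : ∀ t : ℝ, t ∈ Icc (1/2:ℝ) (3/2) →
      ‖wp (Lomega 1) (t:ℂ) - (((t:ℂ)-1)^2)⁻¹‖ ≤ M)
    {x w : ℝ} (hx : 0 < x) (hw : 0 < w) {f : ℝ → ℝ}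
    (hcont : ContinuousOn f (Icc 0 x))
    (hfx : f x = 1)
    (hwpf : ∀ y ∈ Icc 0 x, ((f y : ℝ):ℂ) = 6 * wp (Lomega w) ((y:ℂ) + 2*(w:ℂ)/3)) :
    3*x < w ∧ (12*M ≤ w^2 → w ≤ 3*x + 12) := by
  have hwc : ((w:ℝ):ℂ) ≠ 0 := by exact_mod_cast ne_of_gt hw
  have hw2 : (0:ℝ) < (w^2)⁻¹ := by positivity
  have part1 : 3*x < w := by
    by_contra hcon
    push_neg at hcon
    obtain ⟨B, hB⟩ := (isCompact_Icc).exists_bound_of_continuousOn hcont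
    have hB0 : 0 ≤ B := le_trans (norm_nonneg (f 0)) (hB 0 ⟨le_refl 0, hx.le⟩)
    set S : ℝ := M + (B+1)*w^2/6 with hS
    have hSpos : 0 < S := by positivity
    set ε : ℝ := min (1/3) (1/Real.sqrt S) with hε
    have hε0 : 0 < ε := lt_min (by norm_num) (by positivity)
    have hε13 : ε ≤ 1/3 := min_le_left _ _
    have hεS : S ≤ (ε^2)⁻¹ := by
      have h1 : ε ≤ 1/Real.sqrt S := min_le_right _ _
      have h2 : ε^2 ≤ (1/Real.sqrt S)^2 := pow_le_pow_left₀ hε0.le h1 2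
      have h3 : (1/Real.sqrt S)^2 = S⁻¹ := by
        rw [div_pow, one_pow, Real.sq_sqrt hSpos.le, one_div]
      rw [h3] at h2
      calc S = (S⁻¹)⁻¹ := by rw [inv_inv]
      _ ≤ (ε^2)⁻¹ := by
          apply inv_anti₀ (by positivity) h2
    set t : ℝ := 1 - ε with htdef
    have ht : t ∈ Icc (1/2:ℝ) (3/2) := ⟨by simp only [htdef]; linarith, by simp only [htdef]; linarith⟩
    set y : ℝ := w * (t - 2/3) with hydef
    have hy : y ∈ Icc 0 x := by
      constructor
      · apply mul_nonneg hw.le; simp only [htdef]; linarith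
      · have h1 : y ≤ w * (1/3) := by
          apply mul_le_mul_of_nonneg_left _ hw.le
          simp only [htdef]; linarith
        nlinarith
    have heq := hwpf y hy
    have harg : (y:ℂ) + 2*(w:ℂ)/3 = ((w*t : ℝ):ℂ) := by
      simp only [hydef]; push_cast; ring
    rw [harg, wp_eval hw t] at heq
    -- norms
    have hnormw : ‖((w:ℂ)^2)⁻¹‖ = (w^2)⁻¹ := by
      rw [norm_inv, norm_pow, Complex.norm_real, Real.norm_eq_abs, abs_of_pos hw]
    have hP : ‖(((t:ℂ)-1)^2)⁻¹‖ = (ε^2)⁻¹ := by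
      have : (t:ℂ) - 1 = ((t - 1 : ℝ):ℂ) := by push_cast; ring
      rw [this, norm_inv, norm_pow, Complex.norm_real, Real.norm_eq_abs]
      have : |t - 1| = ε := by rw [htdef]; rw [abs_of_nonpos (by linarith)]; ring
      rw [this]
    have hWt : (ε^2)⁻¹ - M ≤ ‖wp (Lomega 1) ((t:ℝ):ℂ)‖ := by
      have h1 := hkey t ht
      have h2 := norm_sub_norm_le ((((t:ℂ)-1)^2)⁻¹) (wp (Lomega 1) ((t:ℝ):ℂ))
      rw [hP] at h2
      rw [← norm_neg] at h1
      simp only [neg_sub] at h1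
      linarith
    have habs : |f y| = 6 * (w^2)⁻¹ * ‖wp (Lomega 1) ((t:ℝ):ℂ)‖ := by
      have : |f y| = ‖((f y : ℝ):ℂ)‖ := by
        rw [Complex.norm_real, Real.norm_eq_abs]
      rw [this, heq, norm_mul, norm_mul, hnormw]
      norm_num
      ring
    have hfyB : |f y| ≤ B := by
      have := hB y hy; rwa [Real.norm_eq_abs] at this
    have hchain : 6 * (w^2)⁻¹ * ((B+1)*w^2/6) ≤ |f y| := by
      rw [habs]
      apply mul_le_mul_of_nonneg_left _ (by positivity)
      calc (B+1)*w^2/6 = S - M := by rw [hS]; ring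
      _ ≤ (ε^2)⁻¹ - M := by linarith
      _ ≤ _ := hWt
    have hid : 6 * (w^2)⁻¹ * ((B+1)*w^2/6) = B + 1 := by
      field_simp
    rw [hid] at hchain
    linarith
  refine ⟨part1, fun h12 => ?_⟩
  set s : ℝ := w/3 - x with hsdef
  have hs0 : 0 < s := by simp only [hsdef]; linarith
  set t : ℝ := x/w + 2/3 with htdef
  have hxw : x/w < 1/3 := by rw [div_lt_iff₀ hw]; linarith
  have hxw0 : 0 < x/w := by positivity
  have ht : t ∈ Icc (1/2:ℝ) (3/2) := ⟨by simp only [htdef]; linarith, by simp only [htdef]; linarith⟩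
  have heq := hwpf x ⟨hx.le, le_refl x⟩
  have harg : (x:ℂ) + 2*(w:ℂ)/3 = ((w*t : ℝ):ℂ) := by
    simp only [htdef]; push_cast; field_simp
  rw [hfx, harg, wp_eval hw t] at heq
  have hWt : wp (Lomega 1) ((t:ℝ):ℂ) = (((w^2/6 : ℝ)):ℂ) := by
    have h6 : (6:ℂ) ≠ 0 := by norm_num
    field_simp at heq ⊢
    push_cast at heq ⊢
    linear_combination -heq / 6
  have hkey' := hkey t ht
  rw [hWt] at hkey'
  have hts : t - 1 = -(s/w) := by
    simp only [htdef, hsdef]; field_simp; ring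
  have hcast : (((w^2/6 : ℝ)):ℂ) - (((t:ℂ)-1)^2)⁻¹ = (((w^2/6 - ((t-1)^2)⁻¹ : ℝ)):ℂ) := by
    push_cast; ring
  rw [hcast, Complex.norm_real, Real.norm_eq_abs] at hkey'
  have hinv : ((t-1)^2)⁻¹ = w^2/s^2 := by
    rw [hts, neg_sq, div_pow, inv_div]
  rw [hinv] at hkey'
  have habs := abs_le.mp hkey'
  -- w^2/s^2 ≥ w^2/6 - M ≥ w^2/12  ⇒ s^2 ≤ 12 ⇒ s ≤ 4
  have h1 : w^2/12 ≤ w^2/s^2 := by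
    linarith [habs.2, h12]
  have hs2 : s^2 ≤ 12 := by
    rw [div_le_div_iff₀ (by positivity) (by positivity)] at h1
    have hw2' : (0:ℝ) < w^2 := pow_pos hw 2
    nlinarith
  have hs4 : s ≤ 4 := by nlinarith
  simp only [hsdef] at hs4
  linarith

end PA

/-- If for each `x > 0`, `u x (y) = 6 ℘_{Λ_{ω_x}}(y + 2ω_x/3)` is the strictly increasing
solution of `u'' = u²`, `u(0) = 0`, `u(x) = 1` on `[0, x]` with `ω x > 0`, then
`ω_x / x → 3` as `x → ∞`. -/
theorem period_asymptotics
    (ω : ℝ → ℝ) (u : ℝ → ℝ → ℝ)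
    (hyp : ∀ x : ℝ, 0 < x →
      0 < ω x ∧
      ContinuousOn (u x) (Icc 0 x) ∧
      StrictMonoOn (u x) (Icc 0 x) ∧
      (∀ y ∈ Ioo 0 x, deriv (deriv (u x)) y = (u x y) ^ 2) ∧
      u x 0 = 0 ∧ u x x = 1 ∧
      (∀ y ∈ Icc 0 x, ((u x y : ℂ)) =
        6 * wp (Lomega (ω x)) ((y : ℂ) + 2 * ((ω x : ℝ) : ℂ) / 3))) :
    Tendsto (fun x : ℝ => ω x / x) atTop (nhds 3) := by
  obtain ⟨M, hM0, hkey⟩ := PA.key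
  set X : ℝ := max 1 (2 * Real.sqrt M) with hX
  have hcore : ∀ x : ℝ, X ≤ x → 3 ≤ ω x / x ∧ ω x / x ≤ 3 + 12 / x := by
    intro x hXx
    have hx : 0 < x := lt_of_lt_of_le (by norm_num) (le_trans (le_max_left _ _) hXx)
    obtain ⟨hω, hcont, _, _, _, hux, hwpf⟩ := hyp x hx
    have hwpf' : ∀ y ∈ Icc 0 x, ((u x y : ℝ):ℂ) =
        6 * wp (Lomega (ω x)) ((y:ℂ) + 2*((ω x :ℝ):ℂ)/3) := by
      intro y hy
      rw [hwpf y hy]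
    obtain ⟨h1, h2⟩ := PA.core hM0 hkey hx hω hcont hux hwpf'
    have hM12 : 12*M ≤ (ω x)^2 := by
      have hxM : 2*Real.sqrt M ≤ x := le_trans (le_max_right _ _) hXx
      have hMs : Real.sqrt M ^ 2 = M := Real.sq_sqrt hM0
      nlinarith [Real.sqrt_nonneg M, h1]
    have h2' := h2 hM12
    constructor
    · rw [le_div_iff₀ hx]; linarith
    · rw [div_le_iff₀ hx]
      have : (3 + 12/x) * x = 3*x + 12 := by field_simp
      rw [this]; exact h2'
  have hupper : Tendsto (fun x : ℝ => 3 + 12 / x) atTop (nhds 3) := by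
    have h0 : Tendsto (fun x : ℝ => 12 / x) atTop (nhds 0) :=
      tendsto_const_nhds.div_atTop tendsto_id
    have h3 : Tendsto (fun _ : ℝ => (3:ℝ)) atTop (nhds 3) := tendsto_const_nhds
    simpa using h3.add h0
  apply tendsto_of_tendsto_of_tendsto_of_le_of_le' tendsto_const_nhds hupper
  · filter_upwards [eventually_ge_atTop X] with x hx
    exact (hcore x hx).1
  · filter_upwards [eventually_ge_atTop X] with x hx
    exact (hcore x hx).2
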